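/- The maximum over p ∈ [0, 1/2] of H(p)/(1/(1−ε) + p) is positive for every ε ∈ [0,1), and for ε = 0 it equals max_{p∈[0,1/2]} H(p)/(1+p), the capacity of the (1,∞)-RLL input-constrained noiseless binary channel, which equals log₂ φ where φ is the golden ratio. -/

import Mathlib

/-- Binary entropy in bits. -/
noncomputable def binEnt (p : ℝ) : ℝ :=
  -(p * Real.logb 2 p) - ((1 - p) * Real.logb 2 (1 - p))

lemma binEnt_continuous : Continuous binEnt := by
  have h : binEnt = fun p => -((p * Real.log p) / Real.log 2)
      - (((1 - p) * Real.log (1 - p)) / Real.log 2) := by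
    funext p; unfold binEnt Real.logb; ring
  rw [h]
  exact ((Real.continuous_mul_log.div_const _).neg).sub
    ((Real.continuous_mul_log.comp (continuous_const.sub continuous_id)).div_const _)

lemma binEnt_half : binEnt (1/2) = 1 := by
  have hl : Real.log (1/2 : ℝ) = -Real.log 2 := by rw [one_div, Real.log_inv]
  have h2 : Real.log 2 ≠ 0 := (Real.log_pos (by norm_num)).ne'
  unfold binEnt Real.logb
  rw [show (1:ℝ) - 1/2 = 1/2 by norm_num, hl]
  field_simp
  norm_num

lemma sqrt5_facts : 2 < Real.sqrt 5 ∧ Real.sqrt 5 < 3 := by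
  have h5 : Real.sqrt 5 ^ 2 = 5 := Real.sq_sqrt (by norm_num)
  have h0 : 0 ≤ Real.sqrt 5 := Real.sqrt_nonneg 5
  constructor <;> nlinarith

/-- log of the maximizer `(3-√5)/2` in terms of `log φ`. -/
lemma log_p_eq : Real.log ((3 - Real.sqrt 5)/2) = -2 * Real.log ((1 + Real.sqrt 5)/2) := by
  obtain ⟨h2, h3⟩ := sqrt5_facts
  have h5 : Real.sqrt 5 ^ 2 = 5 := Real.sq_sqrt (by norm_num)
  have hp : (0:ℝ) < (3 - Real.sqrt 5)/2 := by linarith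
  have hφ : (0:ℝ) < (1 + Real.sqrt 5)/2 := by linarith
  have hmul : (3 - Real.sqrt 5)/2 * ((1 + Real.sqrt 5)/2)^2 = 1 := by nlinarith
  have := Real.log_mul hp.ne' (by positivity : ((1 + Real.sqrt 5)/2)^2 ≠ 0)
  rw [hmul, Real.log_one, Real.log_pow] at this
  push_cast at this
  linarith

lemma log_1p_eq : Real.log (1 - (3 - Real.sqrt 5)/2) = -Real.log ((1 + Real.sqrt 5)/2) := by
  obtain ⟨h2, h3⟩ := sqrt5_facts
  have h5 : Real.sqrt 5 ^ 2 = 5 := Real.sq_sqrt (by norm_num)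
  have hp : (0:ℝ) < 1 - (3 - Real.sqrt 5)/2 := by linarith
  have hφ : (0:ℝ) < (1 + Real.sqrt 5)/2 := by linarith
  have hmul : (1 - (3 - Real.sqrt 5)/2) * ((1 + Real.sqrt 5)/2) = 1 := by nlinarith
  have := Real.log_mul hp.ne' hφ.ne'
  rw [hmul, Real.log_one] at this
  linarith

lemma binEnt_p : binEnt ((3 - Real.sqrt 5)/2)
    = (1 + (3 - Real.sqrt 5)/2) * Real.logb 2 ((1 + Real.sqrt 5)/2) := by
  unfold binEnt Real.logb
  rw [log_p_eq, log_1p_eq]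
  ring

/-- Gibbs inequality specialized: `H(q) ≤ (1+q) log₂ φ` on `[0,1/2]`. -/
lemma binEnt_le (q : ℝ) (hq0 : 0 ≤ q) (hq : q ≤ 1/2) :
    binEnt q ≤ (1 + q) * Real.logb 2 ((1 + Real.sqrt 5)/2) := by
  obtain ⟨h2, h3⟩ := sqrt5_facts
  set p : ℝ := (3 - Real.sqrt 5)/2 with hpdef
  have hp0 : (0:ℝ) < p := by rw [hpdef]; linarith
  have hp1 : (0:ℝ) < 1 - p := by rw [hpdef]; linarith
  have hlog2 : (0:ℝ) < Real.log 2 := Real.log_pos (by norm_num)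
  have hlogφ : (0:ℝ) < Real.log ((1 + Real.sqrt 5)/2) :=
    Real.log_pos (by rw [lt_div_iff₀ (by norm_num : (0:ℝ) < 2)]; linarith)
  rcases eq_or_lt_of_le hq0 with h | hq0'
  · -- q = 0
    have hb0 : binEnt q = 0 := by
      unfold binEnt; rw [← h]; simp [Real.logb]
    rw [hb0, ← h]
    have hnn : 0 ≤ Real.logb 2 ((1 + Real.sqrt 5)/2) :=
      Real.logb_nonneg (by norm_num) (by rw [le_div_iff₀ (by norm_num : (0:ℝ) < 2)]; linarith)
    nlinarith
  · have h1q : (0:ℝ) < 1 - q := by linarith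
    -- Gibbs terms
    have g1 : q * (Real.log p - Real.log q) ≤ p - q := by
      have hlt := Real.log_le_sub_one_of_pos (show (0:ℝ) < p / q by positivity)
      have := mul_le_mul_of_nonneg_left hlt hq0
      rw [Real.log_div hp0.ne' hq0'.ne'] at this
      calc q * (Real.log p - Real.log q) ≤ q * (p / q - 1) := this
        _ = p - q := by field_simp
    have g2 : (1 - q) * (Real.log (1 - p) - Real.log (1 - q)) ≤ q - p := by
      have hlt := Real.log_le_sub_one_of_pos (show (0:ℝ) < (1 - p) / (1 - q) by positivity)
      have := mul_le_mul_of_nonneg_left hlt h1q.le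
      rw [Real.log_div hp1.ne' h1q.ne'] at this
      calc (1 - q) * (Real.log (1 - p) - Real.log (1 - q))
          ≤ (1 - q) * ((1 - p) / (1 - q) - 1) := this
        _ = q - p := by field_simp; ring
    have key : -(q * Real.log q) - (1 - q) * Real.log (1 - q)
        ≤ (1 + q) * Real.log ((1 + Real.sqrt 5)/2) := by
      have hlp : Real.log p = -2 * Real.log ((1 + Real.sqrt 5)/2) := log_p_eq
      have hl1p : Real.log (1 - p) = -Real.log ((1 + Real.sqrt 5)/2) := log_1p_eq
      nlinarith [g1, g2]
    unfold binEnt Real.logb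
    calc -(q * (Real.log q / Real.log 2)) - (1 - q) * (Real.log (1 - q) / Real.log 2)
        = (-(q * Real.log q) - (1 - q) * Real.log (1 - q)) / Real.log 2 := by ring
      _ ≤ ((1 + q) * Real.log ((1 + Real.sqrt 5)/2)) / Real.log 2 := by gcongr
      _ = (1 + q) * (Real.log ((1 + Real.sqrt 5)/2) / Real.log 2) := by ring

/-- The maximum over `p ∈ [0,1/2]` of `H(p)/(1/(1−ε) + p)` is positive for
every `ε ∈ [0,1)`, and for `ε = 0` it equals `log₂ φ`, the capacity of the
`(1,∞)`-RLL input-constrained noiseless binary channel. -/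
theorem constrained_bec_capacity :
    (∀ ε ∈ Set.Ico (0 : ℝ) 1,
      ∃ p ∈ Set.Icc (0 : ℝ) (1 / 2),
        (∀ q ∈ Set.Icc (0 : ℝ) (1 / 2),
          binEnt q / (1 / (1 - ε) + q) ≤ binEnt p / (1 / (1 - ε) + p)) ∧
        0 < binEnt p / (1 / (1 - ε) + p)) ∧
    (∃ p ∈ Set.Icc (0 : ℝ) (1 / 2),
      (∀ q ∈ Set.Icc (0 : ℝ) (1 / 2),
        binEnt q / (1 + q) ≤ binEnt p / (1 + p)) ∧
      binEnt p / (1 + p) = Real.logb 2 ((1 + Real.sqrt 5) / 2)) := by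
  constructor
  · intro ε hε
    obtain ⟨hε0, hε1⟩ := hε
    have hc : (0:ℝ) < 1 / (1 - ε) := by
      apply div_pos one_pos; linarith
    have hden : ∀ q ∈ Set.Icc (0:ℝ) (1/2), (0:ℝ) < 1 / (1 - ε) + q := by
      intro q hq; have := hq.1; linarith
    have hcont : ContinuousOn (fun q => binEnt q / (1 / (1 - ε) + q)) (Set.Icc 0 (1/2)) := by
      apply ContinuousOn.div (binEnt_continuous.continuousOn)
        ((continuous_const.add continuous_id).continuousOn)
      intro q hq; exact (hden q hq).ne'
    obtain ⟨p, hp, hmax⟩ := isCompact_Icc.exists_isMaxOn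
      (Set.nonempty_Icc.2 (by norm_num)) hcont
    refine ⟨p, hp, fun q hq => hmax hq, ?_⟩
    have hhalf : (1/2 : ℝ) ∈ Set.Icc (0:ℝ) (1/2) := by norm_num
    have h1 := hmax hhalf
    have h2 : (0:ℝ) < binEnt (1/2) / (1 / (1 - ε) + 1/2) := by
      rw [binEnt_half]; exact div_pos one_pos (hden _ hhalf)
    exact lt_of_lt_of_le h2 h1
  · obtain ⟨h2, h3⟩ := sqrt5_facts
    refine ⟨(3 - Real.sqrt 5)/2, ⟨by linarith, by linarith⟩, ?_, ?_⟩
    · intro q hq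
      have hq1 : (0:ℝ) < 1 + q := by have := hq.1; linarith
      have hle := binEnt_le q hq.1 hq.2
      rw [div_le_div_iff₀ hq1 (by linarith : (0:ℝ) < 1 + (3 - Real.sqrt 5)/2), binEnt_p]
      nlinarith [hle, hq.1, Real.logb_nonneg (by norm_num : (1:ℝ) < 2)
        (by linarith : (1:ℝ) ≤ (1 + Real.sqrt 5)/2)]
    · rw [binEnt_p, mul_comm, mul_div_assoc]
      rw [div_self (by linarith : (1:ℝ) + (3 - Real.sqrt 5)/2 ≠ 0), mul_one]
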